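/- If H is a self-bicommutant subgroup of a group Ξ with trivial centre Z(H) = {1} (where Z(H) = H ∩ H'), then H ∨ H' = Ξ, where H ∨ H' := (H ∪ H')''. Hence H is orthocomplemented in the lattice of self-bicommutant subgroups, assuming Ξ is centreless. -/
import Mathlib

lemma centralizer_union_eq {Ξ : Type*} [Group Ξ] (s t : Set Ξ) :
    Subgroup.centralizer (s ∪ t) = Subgroup.centralizer s ⊓ Subgroup.centralizer t := by
  ext x
  simp only [Subgroup.mem_centralizer_iff, Subgroup.mem_inf, Set.mem_union]
  constructor
  · intro h
    exact ⟨fun y hy => h y (Or.inl hy), fun y hy => h y (Or.inr hy)⟩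
  · rintro ⟨h1, h2⟩ y (hy | hy)
    · exact h1 y hy
    · exact h2 y hy

theorem orthocomplemented_of_trivial_centre {Ξ : Type*} [Group Ξ]
    (hΞ : Subgroup.center Ξ = ⊥) (H : Subgroup Ξ)
    (hH : Subgroup.centralizer (Subgroup.centralizer (H : Set Ξ) : Set Ξ) = H)
    (hZ : H ⊓ Subgroup.centralizer (H : Set Ξ) = ⊥) :
    Subgroup.centralizer
      ((Subgroup.centralizer ((H : Set Ξ) ∪ (Subgroup.centralizer (H : Set Ξ) : Set Ξ)) : Subgroup Ξ) : Set Ξ)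
      = ⊤ := by
  have h1 : Subgroup.centralizer ((H : Set Ξ) ∪ (Subgroup.centralizer (H : Set Ξ) : Set Ξ)) = ⊥ := by
    rw [centralizer_union_eq, hH, inf_comm, hZ]
  rw [h1]
  ext x
  simp only [Subgroup.mem_centralizer_iff, Subgroup.mem_top, iff_true]
  intro y hy
  simp only [Subgroup.coe_bot, Set.mem_singleton_iff] at hy
  subst hy
  simp
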